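/- Let $R = k[x_1,\ldots,x_n]$ be a polynomial ring over a field and $f$ a monomial of degree $d$. Then the principal ideal $fR$ is $d$-absorbing but not $(d-1)$-absorbing (for $d \ge 1$); i.e., $\omega(fR) = \deg(f)$. -/

import Mathlib

open Ideal Finset MvPolynomial

/-- `I` is an `N`-absorbing ideal: whenever a product of `N+1` elements lies in `I`,
the product of some `N` of them (omitting one factor) lies in `I`. -/
def IsNAbsorbing {R : Type*} [CommRing R] (I : Ideal R) (N : ℕ) : Prop :=
  ∀ x : Fin (N + 1) → R, (∏ i, x i) ∈ I →
    ∃ j, (∏ i ∈ Finset.univ.erase j, x i) ∈ I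

/-- `ω(I)`: the least `N` such that `I` is `N`-absorbing. -/
noncomputable def omegaAbs {R : Type*} [CommRing R] (I : Ideal R) : ℕ :=
  sInf {N | IsNAbsorbing I N}

/-- The variables `X i` are prime in a multivariate polynomial ring over a field. -/
lemma mvX_prime {k : Type*} [Field k] {n : ℕ} (i : Fin n) :
    Prime (X i : MvPolynomial (Fin n) k) := by
  obtain ⟨m, rfl⟩ : ∃ m, n = m + 1 := ⟨n - 1, by have := i.pos; omega⟩
  have h0 : Prime (X (0 : Fin (m + 1)) : MvPolynomial (Fin (m + 1)) k) := by
    rw [← MulEquiv.prime_iff (MvPolynomial.finSuccEquiv k m).toMulEquiv]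
    simpa [MvPolynomial.finSuccEquiv_X_zero] using
      (Polynomial.prime_X : Prime (Polynomial.X : Polynomial (MvPolynomial (Fin m) k)))
  rw [← MulEquiv.prime_iff (MvPolynomial.renameEquiv k (Equiv.swap i 0)).toMulEquiv]
  simpa [MvPolynomial.renameEquiv_apply, MvPolynomial.rename_X] using h0

/-- If a product of primes divides the product of a multiset `s`, then it divides the
product of a submultiset of `s` of cardinality at most the number of primes. -/
lemma multiset_prime_absorb {R : Type*} [CommRing R] [IsDomain R] (P : Multiset R)
    (hP : ∀ p ∈ P, Prime p) :
    ∀ s : Multiset R, P.prod ∣ s.prod →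
      ∃ t, t ≤ s ∧ Multiset.card t ≤ Multiset.card P ∧ P.prod ∣ t.prod := by
  classical
  induction P using Multiset.induction with
  | empty => intro s _; exact ⟨0, Multiset.zero_le s, by simp, by simp⟩
  | cons p P ih =>
    intro s hdvd
    have hp : Prime p := hP p (Multiset.mem_cons_self p P)
    have hP' : ∀ q ∈ P, Prime q := fun q hq => hP q (Multiset.mem_cons_of_mem hq)
    rw [Multiset.prod_cons] at hdvd
    obtain ⟨x, hxs, y, rfl⟩ : ∃ x ∈ s, ∃ y, x = p * y := by
      obtain ⟨x, hx, hpx⟩ := hp.exists_mem_multiset_dvd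
        (dvd_trans (dvd_mul_right p P.prod) hdvd)
      obtain ⟨y, rfl⟩ := hpx
      exact ⟨_, hx, y, rfl⟩
    set s' := s.erase (p * y) with hs'
    have hcons : (p * y) ::ₘ s' = s := Multiset.cons_erase hxs
    have h2 : P.prod ∣ (y ::ₘ s').prod := by
      rw [Multiset.prod_cons]
      have hsp : s.prod = p * (y * s'.prod) := by
        rw [← hcons, Multiset.prod_cons]; ring
      rw [hsp] at hdvd
      exact (mul_dvd_mul_iff_left hp.ne_zero).1 hdvd
    obtain ⟨t', ht'le, ht'card, ht'dvd⟩ := ih hP' _ h2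
    by_cases hy : y ∈ t'
    · refine ⟨(p * y) ::ₘ t'.erase y, ?_, ?_, ?_⟩
      · rw [← hcons]
        refine Multiset.cons_le_cons _ ?_
        have := Multiset.erase_le_erase y ht'le
        rwa [Multiset.erase_cons_head] at this
      · rw [Multiset.card_cons, Multiset.card_cons]
        exact Nat.add_le_add_right (Multiset.card_erase_le.trans ht'card) 1
      · rw [Multiset.prod_cons, Multiset.prod_cons]
        have : y * (t'.erase y).prod = t'.prod := Multiset.prod_erase hy
        calc p * P.prod ∣ p * t'.prod := mul_dvd_mul_left p ht'dvd
          _ = p * y * (t'.erase y).prod := by rw [← this]; ring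
    · have ht's' : t' ≤ s' := by
        have := Multiset.erase_le_erase y ht'le
        rwa [Multiset.erase_cons_head, Multiset.erase_of_notMem hy] at this
      refine ⟨(p * y) ::ₘ t', ?_, ?_, ?_⟩
      · rw [← hcons]; exact Multiset.cons_le_cons _ ht's'
      · rw [Multiset.card_cons, Multiset.card_cons]
        exact Nat.add_le_add_right ht'card 1
      · rw [Multiset.prod_cons, Multiset.prod_cons]
        have h3 : P.prod ∣ y * t'.prod := Dvd.dvd.mul_left ht'dvd y
        have h4 := mul_dvd_mul_left p h3
        rwa [← mul_assoc] at h4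

theorem omega_principal_monomial {k : Type*} [Field k] (n : ℕ) (a : Fin n → ℕ)
    (d : ℕ) (hd : d = ∑ i, a i) (h1 : 1 ≤ d) :
    IsNAbsorbing (Ideal.span {∏ i, (X i : MvPolynomial (Fin n) k) ^ a i}) d ∧
      ¬ IsNAbsorbing (Ideal.span {∏ i, (X i : MvPolynomial (Fin n) k) ^ a i}) (d - 1) ∧
      omegaAbs (Ideal.span {∏ i, (X i : MvPolynomial (Fin n) k) ^ a i}) = d := by
  classical
  set R := MvPolynomial (Fin n) k
  set f : R := ∏ i, (X i : R) ^ a i with hf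
  have hmem : ∀ g : R, g ∈ Ideal.span {f} ↔ f ∣ g := fun g => Ideal.mem_span_singleton
  set L : List R := (List.finRange n).flatMap fun i => List.replicate (a i) (X i) with hL
  have hLX : ∀ p ∈ L, ∃ i, p = (X i : R) := by
    intro p hp
    rw [hL, List.mem_flatMap] at hp
    obtain ⟨i, _, hpi⟩ := hp
    exact ⟨i, List.eq_of_mem_replicate hpi⟩
  have hLprod : L.prod = f := by
    have key : ∀ l : List (Fin n),
        (l.flatMap fun i => List.replicate (a i) (X i : R)).prod =
          (l.map fun i => (X i : R) ^ a i).prod := by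
      intro l
      induction l with
      | nil => simp
      | cons b l ihl =>
        rw [List.flatMap_cons, List.prod_append, List.map_cons, List.prod_cons,
          List.prod_replicate, ihl]
    rw [hL, key, hf, Fin.prod_univ_def]
  have hLlen : L.length = d := by
    rw [hL, List.length_flatMap, hd, Fin.sum_univ_def]
    congr 1
    simp [Function.comp]
  have hfne : f ≠ 0 := by
    rw [hf]
    refine Finset.prod_ne_zero_iff.2 fun i _ => pow_ne_zero _ (MvPolynomial.X_ne_zero i)
  -- Part 1 : `d`-absorbing
  have abs_d : IsNAbsorbing (Ideal.span {f}) d := by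
    intro x hx
    by_cases h0 : ∃ i, x i = 0
    · obtain ⟨i, hi⟩ := h0
      haveI : Nontrivial (Fin (d + 1)) := by
        obtain ⟨e, rfl⟩ : ∃ e, d = e + 1 := ⟨d - 1, by omega⟩
        infer_instance
      obtain ⟨j, hj⟩ := exists_ne i
      refine ⟨j, ?_⟩
      have hij : i ∈ Finset.univ.erase j := Finset.mem_erase.2 ⟨Ne.symm hj, mem_univ i⟩
      rw [Finset.prod_eq_zero hij hi]
      exact (Ideal.span {f}).zero_mem
    push_neg at h0
    rw [hmem] at hx
    set s : Multiset R := Multiset.map x Finset.univ.val with hs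
    have hsprod : s.prod = ∏ i, x i := (Finset.prod_eq_multiset_prod _ _).symm
    have hLP : ∀ p ∈ (↑L : Multiset R), Prime p := by
      intro p hp
      obtain ⟨i, rfl⟩ := hLX p (Multiset.mem_coe.1 hp)
      exact mvX_prime i
    obtain ⟨t, hts, htc, htd⟩ := multiset_prime_absorb (↑L : Multiset R) hLP s
      (by rw [Multiset.prod_coe, hLprod, hsprod]; exact hx)
    have hcard_s : Multiset.card s = d + 1 := by
      rw [hs, Multiset.card_map]
      simp
    have hcardL : Multiset.card (↑L : Multiset R) = d := by
      rw [Multiset.coe_card, hLlen]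
    have hne : s - t ≠ 0 := by
      intro h
      have hcs := Multiset.card_sub hts
      rw [h] at hcs
      simp only [Multiset.card_zero] at hcs
      omega
    obtain ⟨z, hz⟩ := Multiset.exists_mem_of_ne_zero hne
    have hzs : z ∈ s := Multiset.mem_of_le (Multiset.sub_le_self _ _) hz
    obtain ⟨j, _, rfl⟩ := Multiset.mem_map.1 hzs
    refine ⟨j, (hmem _).2 ?_⟩
    have hle : t ≤ s.erase (x j) := by
      rw [Multiset.le_iff_count]
      intro w
      by_cases hw : w = x j
      · have h1 : 0 < Multiset.count (x j) (s - t) := Multiset.count_pos.2 hz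
        rw [Multiset.count_sub] at h1
        rw [hw, Multiset.count_erase_self]
        omega
      · rw [Multiset.count_erase_of_ne hw]
        exact Multiset.le_iff_count.1 hts w
    have hdvd2 : f ∣ (s.erase (x j)).prod := by
      have : f ∣ t.prod := by rwa [Multiset.prod_coe, hLprod] at htd
      exact this.trans (Multiset.prod_dvd_prod_of_le hle)
    have key : x j * (s.erase (x j)).prod = x j * ∏ i ∈ Finset.univ.erase j, x i := by
      rw [Multiset.prod_erase hzs, Finset.mul_prod_erase Finset.univ x (mem_univ j), ← hsprod]
    have := mul_left_cancel₀ (h0 j) key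
    rwa [← this]
  -- Part 2 : not `N`-absorbing for `N + 1 ≤ d`
  have not_abs : ∀ N : ℕ, N + 1 ≤ d → ¬ IsNAbsorbing (Ideal.span {f}) N := by
    intro N hN habs
    set x : Fin (N + 1) → R := fun j =>
      if h : (j : ℕ) < N then L.get ⟨j, by omega⟩ else (L.drop N).prod with hx
    have hprod : ∏ j, x j = f := by
      rw [Fin.prod_univ_castSucc]
      have h1 : x (Fin.last N) = (L.drop N).prod := by
        rw [hx]; simp
      have hlt : (L.take N).length = N := by rw [List.length_take]; omega
      have h2 : ∏ j : Fin N, x j.castSucc = (L.take N).prod := by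
        rw [← Fin.prod_univ_getElem (L.take N)]
        refine Fintype.prod_equiv (finCongr hlt.symm) _ _ fun j => ?_
        simp only [hx, Fin.coe_castSucc, finCongr_apply]
        rw [dif_pos j.isLt]
        simp [List.get_eq_getElem, List.getElem_take]
      rw [h1, h2, List.prod_take_mul_prod_drop, hLprod]
    obtain ⟨j, hj⟩ := habs x ((hmem _).2 (hprod ▸ dvd_refl f))
    rw [hmem] at hj
    have hfe : x j * ∏ i ∈ Finset.univ.erase j, x i = f := by
      rw [Finset.mul_prod_erase Finset.univ x (mem_univ j), hprod]
    obtain ⟨c, hc⟩ := hj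
    have hunit : IsUnit (x j) := by
      refine IsUnit.of_mul_eq_one (a := x j) c ?_
      have : f * 1 = f * (x j * c) := by
        rw [mul_one]
        calc f = x j * (f * c) := by rw [← hc, hfe]
          _ = f * (x j * c) := by ring
      exact (mul_left_cancel₀ hfne this).symm
    have hnu : ¬ IsUnit (x j) := by
      by_cases h : (j : ℕ) < N
      · simp only [hx]
        rw [dif_pos h]
        obtain ⟨i, hi⟩ := hLX (L.get ⟨(j : ℕ), by omega⟩) (L.get_mem _)
        rw [hi]
        exact (mvX_prime i).not_unit
      · simp only [hx]
        rw [dif_neg h]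
        intro hu
        have hdne : L.drop N ≠ [] := by
          intro hnil
          have hld : (L.drop N).length = L.length - N := List.length_drop
          rw [hnil] at hld
          simp only [List.length_nil] at hld
          omega
        obtain ⟨p, hp⟩ := List.exists_mem_of_ne_nil _ hdne
        obtain ⟨i, rfl⟩ := hLX p (List.mem_of_mem_drop hp)
        exact (mvX_prime i).not_unit (isUnit_of_dvd_unit (List.dvd_prod hp) hu)
    exact hnu hunit
  -- assembling the three parts
  refine ⟨abs_d, not_abs (d - 1) (by omega), ?_⟩
  refine le_antisymm (Nat.sInf_le abs_d) (le_csInf ⟨d, abs_d⟩ ?_)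
  intro m hm
  by_contra hlt
  push_neg at hlt
  exact not_abs m (by omega) hm
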